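/- arXiv:math/0304175 — 3 statements merged into one kernel-verified Lean document; each statement's English description precedes it below -/
import Mathlib

section
/- Let σ ∈ ℝ. For every continuous compactly supported function u : ℝ → ℂ, the limit lim_{t→1⁻} ∫_ℝ (π(a_t)v_K)(x) · conj(u(x)) dx exists and equals ∫_ℝ v_H(x) · conj(u(x)) dx; in particular the function x ↦ v_H(x)·conj(u(x)) is Lebesgue integrable on ℝ. -/
open MeasureTheory Filter Topology Complex

/-- The boundary-value function `v_H` of Example 2.1.5: principal complex powers of
positive reals, parameter `λ = iσ`. -/
noncomputable def vH (σ : ℝ) (x : ℝ) : ℂ :=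
  if |x| < 1 then
    Complex.exp (Complex.I * Real.pi * (1 - Complex.I * σ) / 4) *
      (Real.pi : ℂ) ^ (-(1 / 2 : ℂ)) * ((1 - x ^ 2 : ℝ) : ℂ) ^ (-(1 - Complex.I * σ) / 2)
  else if 1 < |x| then
    Complex.exp (-(Complex.I * Real.pi * (1 - Complex.I * σ) / 4)) *
      (Real.pi : ℂ) ^ (-(1 / 2 : ℂ)) * ((x ^ 2 - 1 : ℝ) : ℂ) ^ (-(1 - Complex.I * σ) / 2)
  else 0

/-- `(π(a_t)v_K)(x)` for `0 ≤ t < 1`: the holomorphically extended principal series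
operator applied to the normalized `K`-spherical vector. -/
noncomputable def piAtvK (σ t : ℝ) (x : ℝ) : ℂ :=
  Complex.exp (Complex.I * Real.pi * t * (1 - Complex.I * σ) / 4) *
    (Real.pi : ℂ) ^ (-(1 / 2 : ℂ)) *
    (1 + Complex.exp (Complex.I * Real.pi * t) * (x : ℂ) ^ 2) ^ (-(1 - Complex.I * σ) / 2)

namespace Stmt0Aux

/-- The factor `1 + e^{iπt} x²`. -/
noncomputable def w (t x : ℝ) : ℂ := 1 + Complex.exp (Complex.I * Real.pi * t) * (x:ℂ)^2

lemma w_eq (t x : ℝ) :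
    w t x = 1 + ((Real.cos (Real.pi * t) : ℝ) + (Real.sin (Real.pi * t) : ℝ) * Complex.I) * (x:ℂ)^2 := by
  have h : Complex.I * Real.pi * t = ((Real.pi * t : ℝ) : ℂ) * Complex.I := by push_cast; ring
  rw [w, h, Complex.exp_mul_I, ← Complex.ofReal_cos, ← Complex.ofReal_sin]

lemma w_re (t x : ℝ) : (w t x).re = 1 + Real.cos (Real.pi * t) * x^2 := by
  rw [w_eq]
  set c := Real.cos (Real.pi * t) with hc
  set s := Real.sin (Real.pi * t) with hs
  simp [Complex.add_re, Complex.mul_re, ← Complex.ofReal_pow]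

lemma w_im (t x : ℝ) : (w t x).im = Real.sin (Real.pi * t) * x^2 := by
  rw [w_eq]
  set c := Real.cos (Real.pi * t) with hc
  set s := Real.sin (Real.pi * t) with hs
  simp [Complex.add_im, Complex.mul_im, ← Complex.ofReal_pow]

lemma abs_w_ge (t x : ℝ) : |1 - x^2| ≤ ‖w t x‖ := by
  rw [← Real.sqrt_sq_eq_abs, Complex.norm_def, Complex.normSq_apply, w_re, w_im]
  apply Real.sqrt_le_sqrt
  nlinarith [Real.neg_one_le_cos (Real.pi * t), Real.sin_sq_add_cos_sq (Real.pi * t),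
    sq_nonneg x, sq_nonneg (x^2)]

lemma w_im_nonneg {t : ℝ} (ht : t ∈ Set.Ioo (0:ℝ) 1) (x : ℝ) : 0 ≤ (w t x).im := by
  rw [w_im]
  have : 0 ≤ Real.sin (Real.pi * t) :=
    (Real.sin_pos_of_pos_of_lt_pi (mul_pos Real.pi_pos ht.1)
      (by nlinarith [Real.pi_pos, ht.2])).le
  positivity

lemma w_mem_slitPlane {t : ℝ} (ht : t ∈ Set.Ioo (0:ℝ) 1) (x : ℝ) :
    w t x ∈ Complex.slitPlane := by
  rw [Complex.mem_slitPlane_iff]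
  rcases eq_or_ne x 0 with hx | hx
  · left; rw [w_re, hx]; norm_num
  · right
    rw [w_im]
    have h1 : 0 < Real.sin (Real.pi * t) :=
      Real.sin_pos_of_pos_of_lt_pi (mul_pos Real.pi_pos ht.1) (by nlinarith [Real.pi_pos, ht.2])
    have h2 : 0 < x^2 := by positivity
    positivity

lemma w_ne_zero {t : ℝ} (ht : t ∈ Set.Ioo (0:ℝ) 1) (x : ℝ) : w t x ≠ 0 :=
  Complex.slitPlane_ne_zero (w_mem_slitPlane ht x)

/-- The exponent. -/
noncomputable def sp (σ : ℝ) : ℂ := -(1 - Complex.I * σ) / 2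

lemma sp_re (σ : ℝ) : (sp σ).re = -(1/2) := by simp [sp]; norm_num
lemma sp_im (σ : ℝ) : (sp σ).im = σ/2 := by simp [sp]

/-- The constant of the dominating function. -/
noncomputable def Cc (σ : ℝ) : ℝ :=
  Real.exp (Real.pi * |σ| / 4) * Real.pi ^ (-(1/2):ℝ) * Real.exp (Real.pi * |σ| / 2)

lemma Cc_pos (σ : ℝ) : 0 < Cc σ := by
  unfold Cc
  positivity

lemma abs_c_eq : ‖(Real.pi : ℂ) ^ (-(1 / 2 : ℂ))‖ = Real.pi ^ (-(1/2):ℝ) := by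
  rw [Complex.norm_cpow_eq_rpow_re_of_pos Real.pi_pos]
  norm_num

lemma abs_cpow_sp_le (σ : ℝ) {x : ℝ} (hx : |x| ≠ 1) {z : ℂ} (hz : |1 - x^2| ≤ ‖z‖) :
    ‖z ^ sp σ‖ ≤ |1 - x^2| ^ (-(1/2):ℝ) * Real.exp (Real.pi * |σ| / 2) := by
  have h0 : (0:ℝ) < |1 - x^2| := by
    rcases hx.lt_or_gt with h | h
    · have : x^2 < 1 := by nlinarith [abs_nonneg x, _root_.sq_abs x]
      rw [abs_pos]; intro hc; nlinarith
    · have : 1 < x^2 := by nlinarith [abs_nonneg x, _root_.sq_abs x]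
      rw [abs_pos]; intro hc; nlinarith
  calc ‖z ^ sp σ‖
      ≤ ‖z‖ ^ (sp σ).re / Real.exp (z.arg * (sp σ).im) := Complex.norm_cpow_le z (sp σ)
    _ = ‖z‖ ^ (-(1/2):ℝ) * Real.exp (-(z.arg * (σ/2))) := by
        rw [sp_re, sp_im, Real.exp_neg, div_eq_mul_inv]
    _ ≤ |1 - x^2| ^ (-(1/2):ℝ) * Real.exp (Real.pi * |σ| / 2) := by
        apply mul_le_mul
        · exact Real.rpow_le_rpow_of_nonpos h0 hz (by norm_num)
        · apply Real.exp_le_exp.mpr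
          calc -(z.arg * (σ/2)) ≤ |z.arg * (σ/2)| := neg_le_abs _
            _ = |z.arg| * (|σ|/2) := by rw [abs_mul, abs_div]; norm_num
            _ ≤ Real.pi * (|σ|/2) := by
                apply mul_le_mul_of_nonneg_right (Complex.abs_arg_le_pi z) (by positivity)
            _ = Real.pi * |σ| / 2 := by ring
        · positivity
        · positivity

lemma abs_exp_pre_le (σ : ℝ) {t : ℝ} (ht0 : 0 ≤ t) (ht1 : t ≤ 1) :
    ‖Complex.exp (Complex.I * Real.pi * t * (1 - Complex.I * σ) / 4)‖ ≤
      Real.exp (Real.pi * |σ| / 4) := by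
  rw [Complex.norm_exp]
  apply Real.exp_le_exp.mpr
  have hre : (Complex.I * Real.pi * t * (1 - Complex.I * σ) / 4).re = Real.pi * t * σ / 4 := by
    simp
  rw [hre]
  have h1 : t * σ ≤ |σ| := by
    nlinarith [le_abs_self σ, neg_abs_le σ, abs_nonneg σ]
  nlinarith [Real.pi_pos]

lemma norm_piAtvK_le (σ : ℝ) {t x : ℝ} (ht : t ∈ Set.Ioo (0:ℝ) 1) (hx : |x| ≠ 1) :
    ‖piAtvK σ t x‖ ≤ Cc σ * |1 - x^2| ^ (-(1/2):ℝ) := by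
  have heq : piAtvK σ t x =
      Complex.exp (Complex.I * Real.pi * t * (1 - Complex.I * σ) / 4) *
        (Real.pi : ℂ) ^ (-(1 / 2 : ℂ)) * (w t x) ^ sp σ := rfl
  rw [heq]
  rw [norm_mul, norm_mul, abs_c_eq]
  calc ‖Complex.exp (Complex.I * Real.pi * t * (1 - Complex.I * σ) / 4)‖ *
        Real.pi ^ (-(1/2):ℝ) * ‖(w t x) ^ sp σ‖
      ≤ Real.exp (Real.pi * |σ| / 4) * Real.pi ^ (-(1/2):ℝ) *
        (|1 - x^2| ^ (-(1/2):ℝ) * Real.exp (Real.pi * |σ| / 2)) := by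
        apply mul_le_mul
        · apply mul_le_mul_of_nonneg_right (abs_exp_pre_le σ ht.1.le ht.2.le) (by positivity)
        · exact abs_cpow_sp_le σ hx (abs_w_ge t x)
        · positivity
        · positivity
    _ = Cc σ * |1 - x^2| ^ (-(1/2):ℝ) := by rw [Cc]; ring

lemma norm_vH_le (σ : ℝ) {x : ℝ} (hx : |x| ≠ 1) :
    ‖vH σ x‖ ≤ Cc σ * |1 - x^2| ^ (-(1/2):ℝ) := by
  have hexp1 : (1:ℝ) ≤ Real.exp (Real.pi * |σ| / 2) := by
    rw [Real.one_le_exp_iff]; positivity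
  rcases hx.lt_or_gt with h | h
  · have hx2 : x^2 < 1 := by nlinarith [abs_nonneg x, _root_.sq_abs x]
    have h0 : (0:ℝ) < 1 - x^2 := by linarith
    rw [vH, if_pos h, norm_mul, norm_mul, abs_c_eq, Complex.norm_exp,
      Complex.norm_cpow_eq_rpow_re_of_pos h0]
    have hre1 : (Complex.I * Real.pi * (1 - Complex.I * σ) / 4).re = Real.pi * σ / 4 := by simp
    have hre2 : (-(1 - Complex.I * σ) / 2).re = -(1/2) := by simp; norm_num
    rw [hre1, hre2]
    have habs : |1 - x^2| = 1 - x^2 := abs_of_pos h0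
    rw [habs]
    rw [Cc]
    have h1 : Real.exp (Real.pi * σ / 4) ≤ Real.exp (Real.pi * |σ| / 4) := by
      apply Real.exp_le_exp.mpr
      have := le_abs_self σ
      nlinarith [Real.pi_pos]
    calc Real.exp (Real.pi * σ / 4) * Real.pi ^ (-(1/2):ℝ) * (1 - x^2) ^ (-(1/2):ℝ)
        ≤ Real.exp (Real.pi * |σ| / 4) * Real.pi ^ (-(1/2):ℝ) * (1 - x^2) ^ (-(1/2):ℝ) := by
          apply mul_le_mul_of_nonneg_right (mul_le_mul_of_nonneg_right h1 (by positivity))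
            (by positivity)
      _ ≤ Real.exp (Real.pi * |σ| / 4) * Real.pi ^ (-(1/2):ℝ) * Real.exp (Real.pi * |σ| / 2) *
          (1 - x^2) ^ (-(1/2):ℝ) := by
          apply mul_le_mul_of_nonneg_right _ (by positivity)
          exact le_mul_of_one_le_right (by positivity) hexp1
  · have hx2 : 1 < x^2 := by nlinarith [abs_nonneg x, _root_.sq_abs x]
    have h0 : (0:ℝ) < x^2 - 1 := by linarith
    rw [vH, if_neg (by simpa using h.le.not_gt), if_pos h, norm_mul, norm_mul,
      abs_c_eq, Complex.norm_exp, Complex.norm_cpow_eq_rpow_re_of_pos h0]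
    have hre1 : (-(Complex.I * Real.pi * (1 - Complex.I * σ) / 4)).re = -(Real.pi * σ / 4) := by
      simp
    have hre2 : (-(1 - Complex.I * σ) / 2).re = -(1/2) := by simp; norm_num
    rw [hre1, hre2]
    have habs : |1 - x^2| = x^2 - 1 := by rw [abs_of_neg (by linarith)]; ring
    rw [habs, Cc]
    have h1 : Real.exp (-(Real.pi * σ / 4)) ≤ Real.exp (Real.pi * |σ| / 4) := by
      apply Real.exp_le_exp.mpr
      have := neg_abs_le σ
      nlinarith [Real.pi_pos]
    calc Real.exp (-(Real.pi * σ / 4)) * Real.pi ^ (-(1/2):ℝ) * (x^2 - 1) ^ (-(1/2):ℝ)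
        ≤ Real.exp (Real.pi * |σ| / 4) * Real.pi ^ (-(1/2):ℝ) * (x^2 - 1) ^ (-(1/2):ℝ) := by
          apply mul_le_mul_of_nonneg_right (mul_le_mul_of_nonneg_right h1 (by positivity))
            (by positivity)
      _ ≤ Real.exp (Real.pi * |σ| / 4) * Real.pi ^ (-(1/2):ℝ) * Real.exp (Real.pi * |σ| / 2) *
          (x^2 - 1) ^ (-(1/2):ℝ) := by
          apply mul_le_mul_of_nonneg_right _ (by positivity)
          exact le_mul_of_one_le_right (by positivity) hexp1

lemma tendsto_exp_pre (σ : ℝ) :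
    Tendsto (fun t : ℝ => Complex.exp (Complex.I * Real.pi * t * (1 - Complex.I * σ) / 4))
      (𝓝 (1:ℝ)) (𝓝 (Complex.exp (Complex.I * Real.pi * (1 - Complex.I * σ) / 4))) := by
  have hc : Continuous fun t : ℝ =>
      Complex.exp (Complex.I * Real.pi * (t:ℂ) * (1 - Complex.I * σ) / 4) := by
    apply Complex.continuous_exp.comp
    fun_prop
  have := hc.tendsto 1
  simpa using this

lemma tendsto_w (x : ℝ) :
    Tendsto (fun t : ℝ => w t x) (𝓝 (1:ℝ)) (𝓝 (((1 - x^2 : ℝ) : ℂ))) := by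
  have hc : Continuous fun t : ℝ => w t x := by
    unfold w
    apply Continuous.add continuous_const
    apply Continuous.mul _ continuous_const
    apply Complex.continuous_exp.comp
    fun_prop
  have := hc.tendsto 1
  have hval : w 1 x = ((1 - x^2 : ℝ) : ℂ) := by
    unfold w
    rw [show Complex.I * (Real.pi:ℂ) * ((1:ℝ):ℂ) = (Real.pi:ℂ) * Complex.I by push_cast; ring,
      Complex.exp_pi_mul_I]
    push_cast; ring
  rwa [hval] at this

lemma piAtvK_eq (σ t x : ℝ) : piAtvK σ t x =
    Complex.exp (Complex.I * Real.pi * t * (1 - Complex.I * σ) / 4) *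
      (Real.pi : ℂ) ^ (-(1 / 2 : ℂ)) * (w t x) ^ sp σ := rfl

lemma tendsto_piAtvK (σ : ℝ) {x : ℝ} (hx : |x| ≠ 1) :
    Tendsto (fun t : ℝ => piAtvK σ t x) (𝓝[<] (1:ℝ)) (𝓝 (vH σ x)) := by
  have hE := (tendsto_exp_pre σ).mono_left (nhdsWithin_le_nhds : 𝓝[<](1:ℝ) ≤ 𝓝 1)
  have hw := (tendsto_w x).mono_left (nhdsWithin_le_nhds : 𝓝[<](1:ℝ) ≤ 𝓝 1)
  have hIoo : Set.Ioo (0:ℝ) 1 ∈ 𝓝[<] (1:ℝ) :=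
    Ioo_mem_nhdsLT_of_mem (by norm_num : (1:ℝ) ∈ Set.Ioc (0:ℝ) 1)
  simp only [piAtvK_eq]
  rcases hx.lt_or_gt with h | h
  · have hx2 : x^2 < 1 := by nlinarith [abs_nonneg x, _root_.sq_abs x]
    have hmem : ((1 - x^2:ℝ):ℂ) ∈ Complex.slitPlane := by
      rw [Complex.mem_slitPlane_iff]; left; rw [Complex.ofReal_re]; linarith
    have hcp : Tendsto (fun t : ℝ => (w t x) ^ sp σ) (𝓝[<](1:ℝ))
        (𝓝 (((1 - x^2:ℝ):ℂ) ^ sp σ)) :=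
      (continuousAt_cpow_const hmem).tendsto.comp hw
    have htot := (hE.mul_const ((Real.pi : ℂ) ^ (-(1 / 2 : ℂ)))).mul hcp
    rw [vH, if_pos h]
    exact htot
  · have hx2 : 1 < x^2 := by nlinarith [abs_nonneg x, _root_.sq_abs x]
    have hzre : (((1 - x^2:ℝ):ℂ)).re < 0 := by rw [Complex.ofReal_re]; linarith
    have hzim : (((1 - x^2:ℝ):ℂ)).im = 0 := Complex.ofReal_im _
    have hw' : Tendsto (fun t : ℝ => w t x) (𝓝[<](1:ℝ))
        (𝓝[{z' : ℂ | 0 ≤ z'.im}] ((1 - x^2:ℝ):ℂ)) :=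
      tendsto_nhdsWithin_of_tendsto_nhds_of_eventually_within _ hw
        (by filter_upwards [hIoo] with t ht; exact w_im_nonneg ht x)
    have hlog : Tendsto (fun t : ℝ => Complex.log (w t x)) (𝓝[<](1:ℝ))
        (𝓝 (↑(Real.log (‖((1 - x^2:ℝ):ℂ)‖)) + ↑Real.pi * Complex.I)) :=
      (Complex.tendsto_log_nhdsWithin_im_nonneg_of_re_neg_of_im_zero hzre hzim).comp hw'
    have habs : ‖((1 - x^2:ℝ):ℂ)‖ = x^2 - 1 := by
      rw [Complex.norm_real, Real.norm_eq_abs, abs_of_neg (by linarith : (1 - x^2:ℝ) < 0)]; ring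
    rw [habs] at hlog
    have hcpow : Tendsto (fun t : ℝ => (w t x) ^ sp σ) (𝓝[<](1:ℝ))
        (𝓝 (Complex.exp ((↑(Real.log (x^2 - 1)) + ↑Real.pi * Complex.I) * sp σ))) := by
      have h1 : Tendsto (fun t : ℝ => Complex.exp (Complex.log (w t x) * sp σ)) (𝓝[<](1:ℝ))
          (𝓝 (Complex.exp ((↑(Real.log (x^2 - 1)) + ↑Real.pi * Complex.I) * sp σ))) :=
        (Complex.continuous_exp.tendsto _).comp (hlog.mul_const _)
      apply h1.congr'
      filter_upwards [hIoo] with t ht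
      rw [Complex.cpow_def_of_ne_zero (w_ne_zero ht x)]
    have htot := (hE.mul_const ((Real.pi : ℂ) ^ (-(1 / 2 : ℂ)))).mul hcpow
    rw [vH, if_neg (by simpa using h.le.not_gt), if_pos h]
    have hcp2 : ((x^2 - 1:ℝ):ℂ) ^ (-(1 - Complex.I*σ)/2) =
        Complex.exp (↑(Real.log (x^2 - 1)) * (-(1 - Complex.I*σ)/2)) := by
      rw [Complex.cpow_def_of_ne_zero
        (by exact_mod_cast ne_of_gt (by linarith : (0:ℝ) < x^2 - 1)),
        Complex.ofReal_log (by linarith : (0:ℝ) ≤ x^2 - 1)]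
    have key : Complex.exp (Complex.I * Real.pi * (1 - Complex.I * σ) / 4) *
        (Real.pi : ℂ) ^ (-(1 / 2 : ℂ)) *
        Complex.exp ((↑(Real.log (x^2 - 1)) + ↑Real.pi * Complex.I) * sp σ) =
        Complex.exp (-(Complex.I * Real.pi * (1 - Complex.I * σ) / 4)) *
        (Real.pi : ℂ) ^ (-(1 / 2 : ℂ)) * ((x^2 - 1:ℝ):ℂ) ^ (-(1 - Complex.I*σ)/2) := by
      rw [hcp2,
        show ((↑(Real.log (x^2 - 1)) : ℂ) + ↑Real.pi * Complex.I) * sp σ =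
          ↑(Real.log (x^2 - 1)) * (-(1 - Complex.I*σ)/2) + ↑Real.pi * Complex.I * sp σ by
            rw [sp]; ring,
        Complex.exp_add]
      have key2 : Complex.exp (Complex.I * Real.pi * (1 - Complex.I * σ) / 4) *
          Complex.exp (↑Real.pi * Complex.I * sp σ) =
          Complex.exp (-(Complex.I * Real.pi * (1 - Complex.I * σ) / 4)) := by
        rw [← Complex.exp_add]; congr 1; rw [sp]; ring
      calc Complex.exp (Complex.I * Real.pi * (1 - Complex.I * σ) / 4) *
            (Real.pi : ℂ) ^ (-(1 / 2 : ℂ)) *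
            (Complex.exp (↑(Real.log (x^2 - 1)) * (-(1 - Complex.I*σ)/2)) *
              Complex.exp (↑Real.pi * Complex.I * sp σ)) =
          (Complex.exp (Complex.I * Real.pi * (1 - Complex.I * σ) / 4) *
            Complex.exp (↑Real.pi * Complex.I * sp σ)) *
            (Real.pi : ℂ) ^ (-(1 / 2 : ℂ)) *
            Complex.exp (↑(Real.log (x^2 - 1)) * (-(1 - Complex.I*σ)/2)) := by ring
        _ = Complex.exp (-(Complex.I * Real.pi * (1 - Complex.I * σ) / 4)) *
            (Real.pi : ℂ) ^ (-(1 / 2 : ℂ)) *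
            Complex.exp (↑(Real.log (x^2 - 1)) * (-(1 - Complex.I*σ)/2)) := by rw [key2]
    rw [← key]
    exact htot


lemma split_bound {x : ℝ} (h1 : x ≠ 1) (h2 : x ≠ -1) :
    |1 - x^2| ^ (-(1/2):ℝ) ≤ |x - 1| ^ (-(1/2):ℝ) + |x + 1| ^ (-(1/2):ℝ) := by
  have ha : (0:ℝ) < |x - 1| := abs_pos.mpr (sub_ne_zero.mpr h1)
  have hb : (0:ℝ) < |x + 1| := abs_pos.mpr (by intro h; apply h2; linarith [eq_neg_of_add_eq_zero_left h])
  have habs : |1 - x^2| = |x - 1| * |x + 1| := by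
    rw [← abs_mul]; rw [abs_sub_comm]; congr 1; ring
  rw [habs, Real.mul_rpow ha.le hb.le]
  have hsum : (2:ℝ) ≤ |x - 1| + |x + 1| := by
    calc (2:ℝ) = |(x+1) - (x-1)| := by norm_num
    _ ≤ |x + 1| + |x - 1| := abs_sub (x+1) (x-1)
    _ = |x - 1| + |x + 1| := by ring
  rcases le_total (|x-1|) (|x+1|) with hle | hle
  · have hb1 : (1:ℝ) ≤ |x + 1| := by linarith
    calc |x-1| ^ (-(1/2):ℝ) * |x+1| ^ (-(1/2):ℝ)
        ≤ |x-1| ^ (-(1/2):ℝ) * 1 := by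
          gcongr
          · exact Real.rpow_le_one_of_one_le_of_nonpos hb1 (by norm_num)
      _ ≤ |x - 1| ^ (-(1/2):ℝ) + |x + 1| ^ (-(1/2):ℝ) := by
          rw [mul_one]; exact le_add_of_nonneg_right (Real.rpow_nonneg hb.le _)
  · have hb1 : (1:ℝ) ≤ |x - 1| := by linarith
    calc |x-1| ^ (-(1/2):ℝ) * |x+1| ^ (-(1/2):ℝ)
        ≤ 1 * |x+1| ^ (-(1/2):ℝ) := by
          gcongr
          · exact Real.rpow_le_one_of_one_le_of_nonpos hb1 (by norm_num)
      _ ≤ |x - 1| ^ (-(1/2):ℝ) + |x + 1| ^ (-(1/2):ℝ) := by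
          rw [one_mul]; exact le_add_of_nonneg_left (Real.rpow_nonneg ha.le _)



lemma abs_rpow_half (y : ℝ) :
    |y| ^ (-(1/2):ℝ) = y ^ (-(1/2):ℝ) + (-y) ^ (-(1/2):ℝ) := by
  have hcos : Real.cos (-(1/2) * Real.pi) = 0 := by
    rw [show (-(1/2) * Real.pi) = -(Real.pi/2) by ring, Real.cos_neg, Real.cos_pi_div_two]
  rcases lt_trichotomy y 0 with h | h | h
  · rw [abs_of_neg h, Real.rpow_def_of_neg h, hcos, mul_zero, zero_add]
  · simp [h, Real.zero_rpow (by norm_num : (-(1/2):ℝ) ≠ 0)]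
  · rw [abs_of_pos h, Real.rpow_def_of_neg (neg_lt_zero.mpr h), hcos, mul_zero, add_zero]

lemma absRpowIntervalIntegrable (a c d : ℝ) :
    IntervalIntegrable (fun x => |x - a| ^ (-(1/2):ℝ)) volume c d := by
  have base : ∀ c d : ℝ, IntervalIntegrable (fun x : ℝ => |x| ^ (-(1/2):ℝ)) volume c d := by
    intro c d
    have h1 : IntervalIntegrable (fun x : ℝ => x ^ (-(1/2):ℝ)) volume c d :=
      intervalIntegral.intervalIntegrable_rpow' (by norm_num)
    have h2 : IntervalIntegrable (fun x : ℝ => (-x) ^ (-(1/2):ℝ)) volume c d := by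
      have := (IntervalIntegrable.iff_comp_neg (f := fun x : ℝ => x ^ (-(1/2):ℝ))
        (a := -c) (b := -d)).mp (intervalIntegral.intervalIntegrable_rpow' (by norm_num))
      simpa using this
    have h3 := h1.add h2
    have heq : (fun x : ℝ => |x| ^ (-(1/2):ℝ)) =
        fun x : ℝ => x ^ (-(1/2):ℝ) + (-x) ^ (-(1/2):ℝ) := funext abs_rpow_half
    rw [heq]
    exact h3
  have := (base (c - a) (d - a)).comp_sub_right a
  simpa using this

lemma measurable_vH (σ : ℝ) : Measurable (vH σ) := by
  have hcpow : Measurable fun z : ℂ => z ^ (-(1 - Complex.I * σ) / 2) := by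
    have heq : (fun z : ℂ => z ^ (-(1 - Complex.I * σ) / 2)) = fun z =>
        if z = 0 then (if (-(1 - Complex.I * (σ:ℂ)) / 2) = 0 then 1 else 0)
        else Complex.exp (Complex.log z * (-(1 - Complex.I * σ) / 2)) := by
      funext z; rw [Complex.cpow_def]
    rw [heq]
    exact Measurable.ite measurableSet_eq measurable_const
      ((Complex.measurable_log.mul_const _).cexp)
  have hb1 : Measurable fun x : ℝ =>
      Complex.exp (Complex.I * Real.pi * (1 - Complex.I * σ) / 4) *
        (Real.pi : ℂ) ^ (-(1 / 2 : ℂ)) * ((1 - x ^ 2 : ℝ) : ℂ) ^ (-(1 - Complex.I * σ) / 2) := by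
    apply Measurable.const_mul
    exact hcpow.comp (Complex.measurable_ofReal.comp
      (measurable_const.sub (measurable_id.pow_const 2)))
  have hb2 : Measurable fun x : ℝ =>
      Complex.exp (-(Complex.I * Real.pi * (1 - Complex.I * σ) / 4)) *
        (Real.pi : ℂ) ^ (-(1 / 2 : ℂ)) * ((x ^ 2 - 1 : ℝ) : ℂ) ^ (-(1 - Complex.I * σ) / 2) := by
    apply Measurable.const_mul
    exact hcpow.comp (Complex.measurable_ofReal.comp
      ((measurable_id.pow_const 2).sub measurable_const))
  unfold vH
  exact Measurable.ite (measurableSet_lt measurable_abs measurable_const) hb1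
    (Measurable.ite (measurableSet_lt measurable_const measurable_abs) hb2 measurable_const)

lemma ae_ne_pm_one : ∀ᵐ x : ℝ, x ≠ 1 ∧ x ≠ -1 := by
  have h1 : ∀ᵐ x : ℝ, x ≠ 1 := by
    rw [ae_iff]
    simp only [ne_eq, not_not, Set.setOf_eq_eq_singleton]
    exact measure_singleton 1
  have h2 : ∀ᵐ x : ℝ, x ≠ -1 := by
    rw [ae_iff]
    simp only [ne_eq, not_not, Set.setOf_eq_eq_singleton]
    exact measure_singleton (-1)
  exact h1.and h2

lemma abs_ne_one {x : ℝ} (h1 : x ≠ 1) (h2 : x ≠ -1) : |x| ≠ 1 := by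
  intro h
  rcases (abs_eq (by norm_num : (0:ℝ) ≤ 1)).mp h with h | h
  · exact h1 h
  · exact h2 h

lemma chain_bound (σ : ℝ) {x : ℝ} (h1 : x ≠ 1) (h2 : x ≠ -1) {v : ℂ}
    (hv : ‖v‖ ≤ Cc σ * |1 - x^2| ^ (-(1/2):ℝ)) (uu : ℂ) :
    ‖v * (starRingEnd ℂ) uu‖ ≤
      Cc σ * ((|x - 1| ^ (-(1/2):ℝ) + |x + 1| ^ (-(1/2):ℝ)) * ‖uu‖) := by
  have hsplit := split_bound h1 h2
  rw [norm_mul, RCLike.norm_conj]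
  calc ‖v‖ * ‖uu‖ ≤ (Cc σ * |1 - x^2| ^ (-(1/2):ℝ)) * ‖uu‖ :=
        mul_le_mul_of_nonneg_right hv (norm_nonneg _)
    _ ≤ (Cc σ * (|x - 1| ^ (-(1/2):ℝ) + |x + 1| ^ (-(1/2):ℝ))) * ‖uu‖ := by
        apply mul_le_mul_of_nonneg_right _ (norm_nonneg _)
        exact mul_le_mul_of_nonneg_left hsplit (Cc_pos σ).le
    _ = Cc σ * ((|x - 1| ^ (-(1/2):ℝ) + |x + 1| ^ (-(1/2):ℝ)) * ‖uu‖) := by ring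

end Stmt0Aux

/-- for every continuous compactly supported `u : ℝ → ℂ`, the function
`x ↦ v_H(x) · conj(u(x))` is integrable and
`∫ (π(a_t)v_K)(x) conj(u(x)) dx → ∫ v_H(x) conj(u(x)) dx` as `t → 1⁻`. -/
theorem statement0 (σ : ℝ) (u : ℝ → ℂ) (hu : Continuous u) (hsupp : HasCompactSupport u) :
    Integrable (fun x : ℝ => vH σ x * (starRingEnd ℂ) (u x)) ∧
    Tendsto (fun t : ℝ => ∫ x : ℝ, piAtvK σ t x * (starRingEnd ℂ) (u x))
      (𝓝[<] (1 : ℝ)) (𝓝 (∫ x : ℝ, vH σ x * (starRingEnd ℂ) (u x))) := by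
  classical
  obtain ⟨M, hM⟩ : ∃ M, ∀ x, ‖u x‖ ≤ M := by
    obtain ⟨M, hM⟩ := hu.norm.bounded_above_of_compact_support hsupp.norm
    exact ⟨M, by simpa using hM⟩
  have hK : IsCompact (tsupport u) := hsupp
  obtain ⟨R, hR⟩ := hK.isBounded.subset_closedBall (0:ℝ)
  rw [Real.closedBall_eq_Icc] at hR
  set g : ℝ → ℝ := fun x =>
    Stmt0Aux.Cc σ * ((|x - 1| ^ (-(1/2):ℝ) + |x + 1| ^ (-(1/2):ℝ)) * ‖u x‖) with hg
  have hIoo : Set.Ioo (0:ℝ) 1 ∈ 𝓝[<] (1:ℝ) :=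
    Ioo_mem_nhdsLT_of_mem (by norm_num : (1:ℝ) ∈ Set.Ioc (0:ℝ) 1)
  have hg_meas : Measurable g := by
    apply Measurable.const_mul
    apply Measurable.mul _ hu.norm.measurable
    fun_prop
  have hg_int : Integrable g := by
    rw [← integrableOn_iff_integrable_of_support_subset
      (s := Set.Icc (0 - R) (0 + R)) ?hsub]
    case hsub =>
      intro x hx
      have hux : u x ≠ 0 := by
        intro h0
        apply hx
        simp [hg, h0]
      exact hR (subset_tsupport u hux)
    · apply Integrable.mono'
        (g := fun x => Stmt0Aux.Cc σ * M *
          (|x - 1| ^ (-(1/2):ℝ) + |x + 1| ^ (-(1/2):ℝ)))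
      · rcases le_or_gt (0 - R) (0 + R) with hRle | hRlt
        · have h1 := Stmt0Aux.absRpowIntervalIntegrable 1 (0 - R) (0 + R)
          have h2' := Stmt0Aux.absRpowIntervalIntegrable (-1) (0 - R) (0 + R)
          have h2 : IntervalIntegrable (fun x : ℝ => |x + 1| ^ (-(1/2):ℝ))
              volume (0 - R) (0 + R) := by
            simpa [sub_neg_eq_add] using h2'
          have hsum := h1.add h2
          rw [intervalIntegrable_iff_integrableOn_Icc_of_le hRle] at hsum
          exact hsum.const_mul _
        · rw [Set.Icc_eq_empty_of_lt hRlt]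
          exact integrableOn_empty
      · exact hg_meas.aestronglyMeasurable.restrict
      · apply Filter.Eventually.of_forall
        intro x
        have h0 : 0 ≤ g x := by
          apply mul_nonneg (Stmt0Aux.Cc_pos σ).le
          apply mul_nonneg _ (norm_nonneg _)
          positivity
        rw [Real.norm_eq_abs, _root_.abs_of_nonneg h0]
        calc g x ≤ Stmt0Aux.Cc σ * ((|x - 1| ^ (-(1/2):ℝ) + |x + 1| ^ (-(1/2):ℝ)) * M) := by
              apply mul_le_mul_of_nonneg_left _ (Stmt0Aux.Cc_pos σ).le
              exact mul_le_mul_of_nonneg_left (hM x) (by positivity)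
          _ = Stmt0Aux.Cc σ * M * (|x - 1| ^ (-(1/2):ℝ) + |x + 1| ^ (-(1/2):ℝ)) := by ring
  -- a.e. bound for vH
  have h_vH_bound : ∀ᵐ x : ℝ, ‖vH σ x * (starRingEnd ℂ) (u x)‖ ≤ g x := by
    filter_upwards [Stmt0Aux.ae_ne_pm_one] with x hx
    exact Stmt0Aux.chain_bound σ hx.1 hx.2
      (Stmt0Aux.norm_vH_le σ (Stmt0Aux.abs_ne_one hx.1 hx.2)) (u x)
  have h_vH_meas : AEStronglyMeasurable (fun x : ℝ => vH σ x * (starRingEnd ℂ) (u x)) volume :=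
    (Stmt0Aux.measurable_vH σ).aestronglyMeasurable.mul
      (hu.star.aestronglyMeasurable)
  have h_int : Integrable (fun x : ℝ => vH σ x * (starRingEnd ℂ) (u x)) :=
    Integrable.mono' hg_int h_vH_meas h_vH_bound
  refine ⟨h_int, ?_⟩
  apply tendsto_integral_filter_of_dominated_convergence g
  · -- measurability
    filter_upwards [hIoo] with t ht
    have hcont : Continuous fun x : ℝ => piAtvK σ t x := by
      simp only [Stmt0Aux.piAtvK_eq]
      apply Continuous.mul continuous_const
      apply Continuous.cpow _ continuous_const (fun x => Stmt0Aux.w_mem_slitPlane ht x)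
      unfold Stmt0Aux.w
      fun_prop
    exact (hcont.mul hu.star).aestronglyMeasurable
  · -- bound
    filter_upwards [hIoo] with t ht
    filter_upwards [Stmt0Aux.ae_ne_pm_one] with x hx
    exact Stmt0Aux.chain_bound σ hx.1 hx.2
      (Stmt0Aux.norm_piAtvK_le σ ht (Stmt0Aux.abs_ne_one hx.1 hx.2)) (u x)
  · exact hg_int
  · -- pointwise limit
    filter_upwards [Stmt0Aux.ae_ne_pm_one] with x hx
    exact (Stmt0Aux.tendsto_piAtvK σ (Stmt0Aux.abs_ne_one hx.1 hx.2)).mul_const _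
end

section
/- Let f : ℂ → ℂ be holomorphic (complex differentiable) on the open strip S = {z ∈ ℂ : |Im z| < 1}. Assume that for every R > 0, sup_{x ∈ [−R,R]} |f(x + i·t)| tends to 0 as t → 1⁻. Then f is identically zero on S. -/
open Filter Topology

/-- a holomorphic function on the strip `{|Im z| < 1}` whose moduli on
horizontal segments `[−R,R] + it` tend to `0` uniformly as `t → 1⁻` vanishes identically
on the strip. -/
theorem statement4 (f : ℂ → ℂ)
    (hf : DifferentiableOn ℂ f {z : ℂ | |z.im| < 1})
    (hb : ∀ R : ℝ, 0 < R → ∀ ε : ℝ, 0 < ε → ∀ᶠ t : ℝ in 𝓝[<] (1 : ℝ),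
      ∀ x : ℝ, x ∈ Set.Icc (-R) R → ‖f (x + t * Complex.I)‖ < ε) :
    ∀ z ∈ {z : ℂ | |z.im| < 1}, f z = 0 := by
  have hSeq : {z : ℂ | |z.im| < 1} = Complex.im ⁻¹' Set.Ioo (-1) 1 := by
    ext z; simp [abs_lt]
  have hSopen : IsOpen {z : ℂ | |z.im| < 1} := by
    rw [hSeq]; exact isOpen_Ioo.preimage Complex.continuous_im
  -- the gauge function
  set g : ℂ → ℂ := fun z => Complex.exp (-2 - Complex.I * z - z ^ 2) with hgdef
  have hgabs : ∀ z : ℂ, ‖g z‖ =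
      Real.exp (z.im + z.im ^ 2 - z.re ^ 2 - 2) := by
    intro z
    rw [hgdef]
    simp only [Complex.norm_exp]
    congr 1
    simp [Complex.sub_re, Complex.mul_re, Complex.sq_norm, pow_two, Complex.mul_im]
    ring
  have hgdiff : Differentiable ℂ g := by
    apply Differentiable.cexp
    fun_prop
  -- uniform bound ≤ 1 near the top edge
  obtain ⟨u, hu1, hu⟩ : ∃ u ∈ Set.Iio (1 : ℝ),
      Set.Ioo u 1 ⊆ {t : ℝ | ∀ x ∈ Set.Icc (-2 : ℝ) 2,
        ‖f (x + t * Complex.I)‖ < 1} :=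
    mem_nhdsLT_iff_exists_Ioo_subset.mp (hb 2 two_pos 1 one_pos)
  set t₁ : ℝ := max u (3 / 4) with ht₁def
  have ht₁1 : t₁ < 1 := by
    rw [ht₁def]; exact max_lt hu1 (by norm_num)
  -- compact rectangle below height t₁ and a global bound M
  set K : Set ℂ := Set.Icc (-2 : ℝ) 2 ×ℂ Set.Icc 0 t₁ with hKdef
  have hKsub : K ⊆ {z : ℂ | |z.im| < 1} := by
    intro z hz
    rw [hKdef, Complex.mem_reProdIm] at hz
    have h0 : (0:ℝ) ≤ t₁ := le_trans (by norm_num) (le_max_right u (3/4))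
    simp only [Set.mem_setOf_eq, abs_lt]
    constructor
    · linarith [hz.2.1]
    · exact lt_of_le_of_lt hz.2.2 ht₁1
  have hKcomp : IsCompact K := by
    apply Metric.isCompact_of_isClosed_isBounded
    · exact (isClosed_Icc.preimage Complex.continuous_re).inter
        (isClosed_Icc.preimage Complex.continuous_im)
    · exact (Metric.isBounded_Icc _ _).reProdIm (Metric.isBounded_Icc _ _)
  obtain ⟨M₀, hM₀⟩ := hKcomp.exists_bound_of_continuousOn
    ((hf.continuousOn).mono hKsub)
  set M : ℝ := max M₀ 1 with hMdef
  have hM1 : (1:ℝ) ≤ M := le_max_right _ _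
  have hMpos : (0:ℝ) < M := lt_of_lt_of_le one_pos hM1
  -- the uniform bound on the sides and bottom of rectangles
  have hfM : ∀ z : ℂ, z.re ∈ Set.Icc (-2:ℝ) 2 → z.im ∈ Set.Icc (0:ℝ) 1 → z.im < 1 →
      ‖f z‖ ≤ M := by
    intro z hre him him1
    rcases le_or_gt z.im t₁ with h | h
    · have : z ∈ K := by
        rw [hKdef, Complex.mem_reProdIm]
        exact ⟨hre, him.1, h⟩
      calc ‖f z‖ = ‖f z‖ := rfl
        _ ≤ M₀ := hM₀ z this
        _ ≤ M := le_max_left _ _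
    · have hz : z.im ∈ Set.Ioo u 1 := ⟨lt_of_le_of_lt (le_max_left _ _) h, him1⟩
      have := hu hz z.re hre
      rw [Complex.re_add_im] at this
      exact le_trans this.le hM1
  -- the key estimate at points i·b, b ∈ [1/2, 3/4]
  have key : ∀ b ∈ Set.Icc (1/2 : ℝ) (3/4), f ((b:ℂ) * Complex.I) = 0 := by
    intro b hbmem
    obtain ⟨hb12, hb34⟩ := hbmem
    have hmain : ∀ n : ℕ, ‖f ((b:ℂ) * Complex.I)‖ ≤ M * Real.exp (-(3/4)) ^ n := by
      intro n
      have hεpos : 0 < M * Real.exp (-2) ^ n :=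
        mul_pos hMpos (pow_pos (Real.exp_pos _) n)
      -- choose t close to 1
      have h1 := hb 2 two_pos (M * Real.exp (-2) ^ n) hεpos
      have h2 : Set.Ioo t₁ 1 ∈ 𝓝[<] (1:ℝ) := Ioo_mem_nhdsLT_of_mem ⟨ht₁1, le_refl 1⟩
      have h2' : ∀ᶠ t in 𝓝[<] (1:ℝ), t ∈ Set.Ioo t₁ 1 := h2
      obtain ⟨t, ht, htIoo⟩ := (h1.and h2').exists
      obtain ⟨ht₁t, ht1⟩ := htIoo
      have ht0 : (0:ℝ) < t := lt_of_le_of_lt (le_trans (by norm_num) (le_max_right u (3/4))) ht₁t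
      -- the rectangle
      set U : Set ℂ := Set.Ioo (-2 : ℝ) 2 ×ℂ Set.Ioo 0 t with hUdef
      have hUb : Bornology.IsBounded U :=
        (Metric.isBounded_Ioo _ _).reProdIm (Metric.isBounded_Ioo _ _)
      have hclU : closure U = Set.Icc (-2 : ℝ) 2 ×ℂ Set.Icc 0 t := by
        rw [hUdef, Complex.closure_reProdIm, closure_Ioo (by norm_num : (-2:ℝ) ≠ 2),
          closure_Ioo ht0.ne]
      have hclUS : closure U ⊆ {z : ℂ | |z.im| < 1} := by
        rw [hclU]
        intro z hz
        rw [Complex.mem_reProdIm] at hz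
        simp only [Set.mem_setOf_eq, abs_lt]
        exact ⟨by linarith [hz.2.1], lt_of_le_of_lt hz.2.2 ht1⟩
      have hd : DiffContOnCl ℂ (fun z => f z * g z ^ n) U := by
        apply DifferentiableOn.diffContOnCl
        exact (hf.mono hclUS).mul ((hgdiff.pow n).differentiableOn)
      -- boundary bound
      have hC : ∀ z ∈ frontier U, ‖f z * g z ^ n‖ ≤ M * Real.exp (-2) ^ n := by
        intro z hz
        rw [hUdef, Complex.frontier_reProdIm, closure_Ioo (by norm_num : (-2:ℝ) ≠ 2),
          closure_Ioo ht0.ne, frontier_Ioo ht0, frontier_Ioo (by norm_num : (-2:ℝ) < 2)] at hz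
        rw [norm_mul, norm_pow]
        have habs : ∀ w : ℂ, ‖w‖ = ‖w‖ := fun _ => rfl
        have hgnn : (0:ℝ) ≤ ‖g z‖ ^ n := pow_nonneg (norm_nonneg _) n
        rcases hz with hz | hz
        · rw [Complex.mem_reProdIm, Set.mem_insert_iff, Set.mem_singleton_iff] at hz
          rcases hz.2 with him | him
          · -- bottom edge : im = 0
            have hfz : ‖f z‖ ≤ M :=
              hfM z hz.1 (by rw [him]; exact ⟨le_refl 0, zero_le_one⟩) (by rw [him]; norm_num)
            have hgz : ‖g z‖ ≤ Real.exp (-2) := by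
              rw [habs, hgabs, him]
              apply Real.exp_le_exp.mpr
              nlinarith [sq_nonneg z.re]
            exact mul_le_mul hfz (pow_le_pow_left₀ (norm_nonneg _) hgz n) hgnn hMpos.le
          · -- top edge : im = t
            have hfz : ‖f z‖ < M * Real.exp (-2) ^ n := by
              have h := ht z.re hz.1
              rw [← him, Complex.re_add_im] at h
              exact h
            have hgz : ‖g z‖ ^ n ≤ 1 := by
              apply pow_le_one₀ (norm_nonneg _)
              rw [habs, hgabs, him, Real.exp_le_one_iff]
              nlinarith [sq_nonneg z.re]
            have h2 : ‖f z‖ * ‖g z‖ ^ n ≤ (M * Real.exp (-2) ^ n) * 1 :=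
              mul_le_mul hfz.le hgz hgnn hεpos.le
            rw [mul_one] at h2
            exact h2
        · -- side edges : re = ±2
          rw [Complex.mem_reProdIm, Set.mem_insert_iff, Set.mem_singleton_iff] at hz
          have him : z.im ∈ Set.Icc (0:ℝ) t := hz.2
          have hre2 : z.re = -2 ∨ z.re = 2 := hz.1
          have hfz : ‖f z‖ ≤ M := by
            apply hfM z
            · rcases hre2 with h | h <;> rw [h] <;> norm_num
            · exact ⟨him.1, le_trans him.2 ht1.le⟩
            · exact lt_of_le_of_lt him.2 ht1
          have hgz : ‖g z‖ ≤ Real.exp (-2) := by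
            rw [habs, hgabs]
            apply Real.exp_le_exp.mpr
            have h4 : z.re ^ 2 = 4 := by rcases hre2 with h | h <;> rw [h] <;> norm_num
            have himle : z.im ≤ 1 := le_trans him.2 ht1.le
            nlinarith [him.1]
          exact mul_le_mul hfz (pow_le_pow_left₀ (norm_nonneg _) hgz n) hgnn hMpos.le
      -- w = b·i lies in the closure
      have hwmem : ((b:ℂ) * Complex.I) ∈ closure U := by
        rw [hclU, Complex.mem_reProdIm]
        constructor
        · simp
        · simp only [Complex.mul_im, Complex.ofReal_re, Complex.I_im, Complex.ofReal_im,
            Complex.I_re, mul_one, mul_zero, add_zero]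
          constructor
          · linarith
          · have : (3/4 : ℝ) ≤ t₁ := le_max_right _ _
            linarith
      have hmax := Complex.norm_le_of_forall_mem_frontier_norm_le hUb hd hC hwmem
      -- unfold the gauge value at w
      have hgw : ‖g ((b:ℂ) * Complex.I)‖ ≥ Real.exp (-(5/4)) := by
        have habs : ‖g ((b:ℂ) * Complex.I)‖ = ‖g ((b:ℂ) * Complex.I)‖ := rfl
        rw [habs, hgabs]
        simp only [Complex.mul_im, Complex.mul_re, Complex.ofReal_re, Complex.I_im,
          Complex.ofReal_im, Complex.I_re, mul_one, mul_zero, add_zero, sub_zero, zero_mul]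
        apply Real.exp_le_exp.mpr
        nlinarith
      rw [norm_mul, norm_pow] at hmax
      have hgwn : Real.exp (-(5/4)) ^ n ≤ ‖g ((b:ℂ) * Complex.I)‖ ^ n :=
        pow_le_pow_left₀ (Real.exp_pos _).le hgw n
      have hgwpos : (0:ℝ) < Real.exp (-(5/4)) ^ n := pow_pos (Real.exp_pos _) n
      have h5 : ‖f ((b:ℂ) * Complex.I)‖ * Real.exp (-(5/4)) ^ n ≤ M * Real.exp (-2) ^ n :=
        le_trans (mul_le_mul_of_nonneg_left hgwn (norm_nonneg _)) hmax
      have h6 : ‖f ((b:ℂ) * Complex.I)‖ ≤ M * Real.exp (-2) ^ n / Real.exp (-(5/4)) ^ n :=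
        (le_div_iff₀ hgwpos).mpr h5
      calc ‖f ((b:ℂ) * Complex.I)‖ ≤ M * Real.exp (-2) ^ n / Real.exp (-(5/4)) ^ n := h6
        _ = M * (Real.exp (-2) / Real.exp (-(5/4))) ^ n := by rw [div_pow, mul_div_assoc]
        _ = M * Real.exp (-(3/4)) ^ n := by rw [← Real.exp_sub]; norm_num
    -- pass to the limit
    have hlim : Tendsto (fun n : ℕ => M * Real.exp (-(3/4)) ^ n) atTop (𝓝 (M * 0)) := by
      apply Tendsto.const_mul
      apply tendsto_pow_atTop_nhds_zero_of_lt_one (Real.exp_pos _).le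
      rw [Real.exp_lt_one_iff]; norm_num
    rw [mul_zero] at hlim
    have : ‖f ((b:ℂ) * Complex.I)‖ ≤ 0 :=
      ge_of_tendsto hlim (Filter.Eventually.of_forall hmain)
    simpa using le_antisymm this (norm_nonneg _)
  -- identity theorem
  have hA : AnalyticOnNhd ℂ f {z : ℂ | |z.im| < 1} := hf.analyticOnNhd hSopen
  have hconv : Convex ℝ {z : ℂ | |z.im| < 1} := by
    rw [hSeq]
    exact (convex_Ioo (-1:ℝ) 1).linear_preimage Complex.imCLM.toLinearMap
  have hpre : IsPreconnected {z : ℂ | |z.im| < 1} := hconv.isPreconnected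
  have hz₀ : ((1/2 : ℝ) : ℂ) * Complex.I ∈ {z : ℂ | |z.im| < 1} := by
    simp only [Set.mem_setOf_eq, Complex.mul_im, Complex.ofReal_re, Complex.I_im,
      Complex.ofReal_im, Complex.I_re, mul_one, mul_zero, add_zero]
    rw [abs_of_nonneg (by norm_num : (0:ℝ) ≤ 1/2)]; norm_num
  have hfreq : ∃ᶠ z in 𝓝[≠] (((1/2 : ℝ) : ℂ) * Complex.I), f z = 0 := by
    set bs : ℕ → ℝ := fun k => 1/2 + 1/4 * (1 / (k + 1)) with hbs
    have hbsmem : ∀ k, bs k ∈ Set.Icc (1/2 : ℝ) (3/4) := by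
      intro k
      constructor
      · have : (0:ℝ) < 1 / (k + 1) := by positivity
        rw [hbs]; simp only; nlinarith
      · have h1 : (1:ℝ) / (k + 1) ≤ 1 := by
          rw [div_le_one (by positivity)]
          have : (0:ℝ) ≤ (k:ℝ) := Nat.cast_nonneg k
          linarith
        rw [hbs]; simp only; nlinarith
    have hbstend : Tendsto bs atTop (𝓝 (1/2 : ℝ)) := by
      have h0 : Tendsto (fun k : ℕ => (1:ℝ) / (k + 1)) atTop (𝓝 0) :=
        tendsto_one_div_add_atTop_nhds_zero_nat
      have := (h0.const_mul (1/4 : ℝ)).const_add (1/2 : ℝ)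
      simpa [hbs] using this
    have htend : Tendsto (fun k : ℕ => ((bs k : ℝ) : ℂ) * Complex.I) atTop
        (𝓝[≠] (((1/2 : ℝ) : ℂ) * Complex.I)) := by
      rw [tendsto_nhdsWithin_iff]
      constructor
      · exact ((Complex.continuous_ofReal.tendsto _).comp hbstend).mul tendsto_const_nhds
      · apply Filter.Eventually.of_forall
        intro k
        simp only [Set.mem_compl_iff, Set.mem_singleton_iff]
        intro hcon
        have hI : Complex.I ≠ 0 := Complex.I_ne_zero
        have := mul_right_cancel₀ hI hcon
        have hbk : bs k = 1/2 := Complex.ofReal_injective this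
        have : (0:ℝ) < 1 / (k + 1) := by positivity
        rw [hbs] at hbk; simp only at hbk; nlinarith
    exact htend.frequently (Filter.Eventually.of_forall
      (fun k => key (bs k) (hbsmem k)) |>.frequently)
  exact fun z hz => hA.eqOn_zero_of_preconnected_of_frequently_eq_zero hpre hz₀ hfreq hz
end

section
/- Let H be a complex Hilbert space and let π : ℝ → (H ≃ₗᵢ H) be a group homomorphism into the group of unitary operators such that t ↦ π(t)v is continuous for every v ∈ H. Let ε > 0 and let f : ℝ → ℂ be integrable, and assume there is a holomorphic function F on the strip {z ∈ ℂ : |Im z| < ε} with F(x) = f(x) for almost every x ∈ ℝ, such that x ↦ F(x + i·b) is integrable for every |b| < ε and sup_{|b| ≤ b₀} ∫_ℝ |F(x + i·b)| dx < ∞ for every 0 < b₀ < ε. Then for every v ∈ H the map ℝ → H given by t ↦ π(t)( ∫_ℝ f(s) • π(s)v ds ) (Bochner integral) is real-analytic. -/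
open MeasureTheory Complex
open Metric

lemma aux_lip {F : ℂ → ℂ} {c : ℂ} {r : ℝ} (hr : 0 < r)
    (hd : DifferentiableOn ℂ F (closedBall c (2*r)))
    {w₁ w₂ : ℂ} (h1 : w₁ ∈ ball c r) (h2 : w₂ ∈ ball c r) :
    ‖F w₁ - F w₂‖ ≤
      (Real.pi * r)⁻¹ * (∫ θ in (0)..(2*Real.pi), ‖F (circleMap c (2*r) θ)‖)
        * dist w₁ w₂ := by
  set R : ℝ := 2*r with hR
  have hRpos : 0 < R := by positivity
  have hball : ∀ w ∈ ball c r, w ∈ ball c R := fun w hw =>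
    ball_subset_ball (by rw [hR]; linarith) hw
  have hc1 := hd.circleIntegral_sub_inv_smul (hball _ h1)
  have hc2 := hd.circleIntegral_sub_inv_smul (hball _ h2)
  have hFsph : ContinuousOn F (sphere c R) :=
    hd.continuousOn.mono (sphere_subset_closedBall)
  have hsphmem : ∀ θ : ℝ, circleMap c R θ ∈ sphere c R := fun θ =>
    circleMap_mem_sphere c hRpos.le θ
  have hfar : ∀ w ∈ ball c r, ∀ ζ ∈ sphere c R, r ≤ ‖ζ - w‖ := by
    intro w hw ζ hζ
    have e1 : dist ζ c = R := mem_sphere.mp hζ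
    have e2 : dist w c < r := mem_ball.mp hw
    have e3 : dist ζ c ≤ dist ζ w + dist w c := dist_triangle ζ w c
    have : dist ζ w ≥ R - r := by linarith
    calc r = R - r := by rw [hR]; ring
    _ ≤ dist ζ w := this
    _ = ‖ζ - w‖ := Complex.dist_eq ζ w
  have hne : ∀ w ∈ ball c r, ∀ ζ ∈ sphere c R, ζ - w ≠ 0 := by
    intro w hw ζ hζ
    have := hfar w hw ζ hζ
    intro h
    rw [h] at this
    simp at this
    linarith
  have hFc : Continuous fun θ => F (circleMap c R θ) :=
    hFsph.comp_continuous (continuous_circleMap c R) hsphmem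
  have hinvc : ∀ w ∈ ball c r, Continuous fun θ => (circleMap c R θ - w)⁻¹ := by
    intro w hw
    exact ((continuous_circleMap c R).sub continuous_const).inv₀
      (fun θ => hne w hw _ (hsphmem θ))
  have hci : ∀ w ∈ ball c r, CircleIntegrable (fun ζ => (ζ - w)⁻¹ • F ζ) c R := by
    intro w hw
    refine ContinuousOn.circleIntegrable hRpos.le ?_
    exact (((continuousOn_id.sub continuousOn_const).inv₀ (fun ζ hζ => hne w hw ζ hζ)).smul hFsph)
  have h2pine : (2 * ↑Real.pi * I : ℂ) ≠ 0 := by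
    simp [Real.pi_ne_zero, I_ne_zero]
  have hFw : F w₁ - F w₂ = (2 * ↑Real.pi * I : ℂ)⁻¹ •
      ((∮ z in C(c, R), (z - w₁)⁻¹ • F z) - (∮ z in C(c, R), (z - w₂)⁻¹ • F z)) := by
    rw [hc1, hc2, ← smul_sub, inv_smul_smul₀ h2pine]
  have hsub : (∮ z in C(c, R), (z - w₁)⁻¹ • F z) - (∮ z in C(c, R), (z - w₂)⁻¹ • F z)
      = ∮ z in C(c, R), ((z - w₁)⁻¹ - (z - w₂)⁻¹) • F z := by
    rw [← circleIntegral.integral_sub (hci _ h1) (hci _ h2)]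
    simp [sub_mul]
  set d : ℝ := dist w₁ w₂ with hd'
  have hbnd : ‖∮ z in C(c, R), ((z - w₁)⁻¹ - (z - w₂)⁻¹) • F z‖ ≤
      ∫ θ in (0)..(2*Real.pi), (R * (d / r^2)) * ‖F (circleMap c R θ)‖ := by
    refine le_trans (intervalIntegral.norm_integral_le_integral_norm Real.two_pi_pos.le) ?_
    refine intervalIntegral.integral_mono_on Real.two_pi_pos.le ?_ ?_ ?_
    · apply Continuous.intervalIntegrable
      apply Continuous.norm
      simp only [deriv_circleMap]
      exact ((continuous_circleMap 0 R).mul continuous_const).smul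
        (((hinvc _ h1).sub (hinvc _ h2)).smul hFc)
    · exact ((continuous_const.mul (hFc.norm))).intervalIntegrable _ _
    · intro θ _
      have hζ := hsphmem θ
      set ζ := circleMap c R θ with hζdef
      have e1 : ζ - w₁ ≠ 0 := hne _ h1 _ hζ
      have e2 : ζ - w₂ ≠ 0 := hne _ h2 _ hζ
      have ealg : (ζ - w₁)⁻¹ - (ζ - w₂)⁻¹ = (w₁ - w₂) * ((ζ - w₁) * (ζ - w₂))⁻¹ := by
        field_simp
        ring
      have habs : ‖(ζ - w₁)⁻¹ - (ζ - w₂)⁻¹‖ ≤ d / r^2 := by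
        rw [ealg]
        rw [norm_mul, norm_inv, norm_mul]
        have hb1 := hfar _ h1 _ hζ
        have hb2 := hfar _ h2 _ hζ
        have : ‖w₁ - w₂‖ = d := (Complex.dist_eq w₁ w₂).symm
        rw [this]
        rw [div_eq_mul_inv]
        apply mul_le_mul_of_nonneg_left ?_ dist_nonneg
        apply inv_anti₀ (by positivity)
        calc r^2 = r * r := sq r
        _ ≤ ‖ζ - w₁‖ * ‖ζ - w₂‖ :=
          mul_le_mul hb1 hb2 hr.le (by positivity)
      calc ‖deriv (circleMap c R) θ • (((ζ - w₁)⁻¹ - (ζ - w₂)⁻¹) • F ζ)‖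
          = R * (‖(ζ - w₁)⁻¹ - (ζ - w₂)⁻¹‖ * ‖F ζ‖) := by
            simp [norm_smul, deriv_circleMap, abs_of_pos hRpos]
        _ ≤ R * ((d / r^2) * ‖F ζ‖) := by
            apply mul_le_mul_of_nonneg_left ?_ hRpos.le
            exact mul_le_mul_of_nonneg_right habs (norm_nonneg _)
        _ = (R * (d / r^2)) * ‖F ζ‖ := by ring
  rw [hFw, hsub, norm_smul]
  have hn2pi : ‖(2 * ↑Real.pi * I : ℂ)⁻¹‖ = (2*Real.pi)⁻¹ := by
    simp [Real.pi_pos.le]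
  rw [hn2pi]
  rw [intervalIntegral.integral_const_mul] at hbnd
  calc (2*Real.pi)⁻¹ * ‖∮ z in C(c, R), ((z - w₁)⁻¹ - (z - w₂)⁻¹) • F z‖
      ≤ (2*Real.pi)⁻¹ * ((R * (d / r^2)) * ∫ θ in (0)..(2*Real.pi), ‖F (circleMap c R θ)‖) := by
        apply mul_le_mul_of_nonneg_left hbnd (by positivity)
    _ = (Real.pi * r)⁻¹ * (∫ θ in (0)..(2*Real.pi), ‖F (circleMap c R θ)‖) * d := by
        rw [hR]
        field_simp

/-- if `π` is a strongly continuous unitary representation of `ℝ` on a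
complex Hilbert space `H` and `f ∈ L¹(ℝ)` extends holomorphically to the strip
`{|Im z| < ε}` with uniformly bounded `L¹`-norms on horizontal lines, then for every
`v ∈ H` the vector `π(f)v = ∫ f(s)·π(s)v ds` is an analytic vector: the orbit map
`t ↦ π(t)(π(f)v)` is real-analytic. -/
theorem statement14 {H : Type*} [NormedAddCommGroup H] [InnerProductSpace ℂ H]
    [CompleteSpace H]
    (π : ℝ → (H ≃ₗᵢ[ℂ] H))
    (hπ0 : ∀ v : H, π 0 v = v)
    (hπadd : ∀ s t : ℝ, ∀ v : H, π (s + t) v = π s (π t v))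
    (hπcont : ∀ v : H, Continuous fun t : ℝ => π t v)
    (ε : ℝ) (hε : 0 < ε) (f : ℝ → ℂ) (hf : Integrable f (volume : Measure ℝ))
    (F : ℂ → ℂ)
    (hF : DifferentiableOn ℂ F {z : ℂ | |z.im| < ε})
    (hFf : ∀ᵐ x : ℝ ∂volume, F (x : ℂ) = f x)
    (hFint : ∀ b : ℝ, |b| < ε → Integrable fun x : ℝ => F (x + b * Complex.I))
    (hFsup : ∀ b₀ : ℝ, 0 < b₀ → b₀ < ε → ∃ M : ℝ, ∀ b : ℝ, |b| ≤ b₀ →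
      (∫ x : ℝ, ‖F (x + b * Complex.I)‖) ≤ M) :
    ∀ v : H, ∀ t : ℝ,
      AnalyticAt ℝ (fun t : ℝ => π t (∫ s : ℝ, f s • π s v)) t := by
  intro v t
  have hcv : Continuous fun s : ℝ => π s v := hπcont v
  set S : Set ℂ := {z : ℂ | |z.im| < ε} with hSdef
  have hSopen : IsOpen S := by
    have : S = (fun z : ℂ => |z.im|) ⁻¹' Set.Iio ε := rfl
    rw [this]
    exact isOpen_Iio.preimage (_root_.continuous_abs.comp Complex.continuous_im)
  have hFcont : ContinuousOn F S := hF.continuousOn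
  have hmemS : ∀ z : ℂ, z ∈ S → ∀ s : ℝ, ((s : ℂ) - z) ∈ S := by
    intro z hz s
    show |((s : ℂ) - z).im| < ε
    rw [Complex.sub_im, Complex.ofReal_im, zero_sub, abs_neg]; exact hz
  have hA : ∀ z : ℂ, z ∈ S → Integrable (fun s : ℝ => F ((s : ℂ) - z)) volume := by
    intro z hz
    have h1 : Integrable (fun x : ℝ => F ((x : ℂ) + ((-z.im : ℝ) : ℂ) * Complex.I)) volume :=
      hFint _ (by rw [abs_neg]; exact hz)
    have h2 := h1.comp_sub_right z.re
    refine h2.congr (Filter.Eventually.of_forall fun s => ?_)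
    have harg : ((s - z.re : ℝ) : ℂ) + ((-z.im : ℝ) : ℂ) * Complex.I = (s : ℂ) - z := by
      apply Complex.ext <;> simp
    show F (((s - z.re : ℝ) : ℂ) + ((-z.im : ℝ) : ℂ) * Complex.I) = F ((s : ℂ) - z)
    rw [harg]
  have hQc : ∀ z ∈ S, Continuous fun s : ℝ => F ((s : ℂ) - z) • π s v := by
    intro z hz
    have h1 : Continuous fun s : ℝ => F ((s : ℂ) - z) :=
      hFcont.comp_continuous (Complex.continuous_ofReal.sub continuous_const) (hmemS z hz)
    exact h1.smul hcv
  have hQint : ∀ z ∈ S, Integrable (fun s : ℝ => F ((s : ℂ) - z) • π s v) volume := by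
    intro z hz
    refine Integrable.mono' ((hA z hz).norm.mul_const ‖v‖) (hQc z hz).aestronglyMeasurable
      (Filter.Eventually.of_forall fun s => ?_)
    rw [norm_smul, (π s).norm_map]
  set Φ : ℂ → H := fun z => ∫ s : ℝ, F ((s : ℂ) - z) • π s v with hΦdef
  have hΦdiff : DifferentiableOn ℂ Φ S := by
    intro z₀ hz₀
    have hz₀' : |z₀.im| < ε := hz₀
    set r : ℝ := (ε - |z₀.im|) / 4 with hrdef
    have hrpos : 0 < r := by rw [hrdef]; linarith
    have hstrip : |z₀.im| + 2*r < ε := by rw [hrdef]; linarith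
    have hcb : ∀ s : ℝ, closedBall ((s : ℂ) - z₀) (2*r) ⊆ S := by
      intro s w hw
      have h1 : |w.im - ((s : ℂ) - z₀).im| ≤ 2*r := by
        calc |w.im - ((s : ℂ) - z₀).im| = |(w - ((s : ℂ) - z₀)).im| := by
              simp [Complex.sub_im]
          _ ≤ ‖w - ((s : ℂ) - z₀)‖ := Complex.abs_im_le_norm _
          _ ≤ 2*r := by
              rw [← Complex.dist_eq]
              exact mem_closedBall.mp hw
      have h2 : ((s : ℂ) - z₀).im = -z₀.im := by simp [Complex.sub_im]
      rw [h2] at h1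
      show |w.im| < ε
      have h3 : |w.im| ≤ |w.im - (-z₀.im)| + |(-z₀.im)| := by
        have := abs_add_le (w.im - (-z₀.im)) (-z₀.im)
        simpa using this
      rw [abs_neg] at h3
      linarith
    set ν : Measure ℝ := volume.restrict (Set.Ioc 0 (2*Real.pi)) with hν
    have hνfin : IsFiniteMeasure ν := by
      constructor
      rw [hν, Measure.restrict_apply_univ, Real.volume_Ioc]
      exact ENNReal.ofReal_lt_top
    set A : ℝ × ℝ → ℝ :=
      fun p => ‖F (circleMap ((p.1 : ℂ) - z₀) (2*r) p.2)‖ with hAdef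
    have hmapS : ∀ p : ℝ × ℝ, circleMap ((p.1 : ℂ) - z₀) (2*r) p.2 ∈ S := fun p =>
      hcb p.1 (circleMap_mem_closedBall _ (by positivity) _)
    have hAcont : Continuous A := by
      apply continuous_norm.comp
      apply hFcont.comp_continuous ?_ hmapS
      simp only [circleMap]
      fun_prop
    have hbθ : ∀ θ : ℝ, |2*r*Real.sin θ - z₀.im| ≤ |z₀.im| + 2*r := by
      intro θ
      have hs1 : |Real.sin θ| ≤ 1 := abs_le.2 ⟨Real.neg_one_le_sin θ, Real.sin_le_one θ⟩
      have : |2*r*Real.sin θ| ≤ 2*r := by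
        rw [abs_mul]
        calc |2*r| * |Real.sin θ| ≤ |2*r| * 1 :=
              mul_le_mul_of_nonneg_left hs1 (abs_nonneg _)
          _ = 2*r := by rw [mul_one, abs_of_pos (by positivity)]
      calc |2*r*Real.sin θ - z₀.im| ≤ |2*r*Real.sin θ| + |z₀.im| := abs_sub _ _
        _ ≤ 2*r + |z₀.im| := by linarith
        _ = |z₀.im| + 2*r := by ring
    have hcirc_eq : ∀ s θ : ℝ, circleMap ((s : ℂ) - z₀) (2*r) θ
        = ((s + (2*r*Real.cos θ - z₀.re) : ℝ) : ℂ)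
          + ((2*r*Real.sin θ - z₀.im : ℝ) : ℂ) * Complex.I := by
      intro s θ
      simp only [circleMap, Complex.ext_iff, Complex.add_re, Complex.add_im, Complex.sub_re,
        Complex.sub_im, Complex.ofReal_re, Complex.ofReal_im, Complex.mul_re, Complex.mul_im,
        Complex.I_re, Complex.I_im, Complex.exp_ofReal_mul_I_re, Complex.exp_ofReal_mul_I_im]
      constructor <;> ring
    have hslice : ∀ θ : ℝ, Integrable (fun s : ℝ => A (s, θ)) volume := by
      intro θ
      have hb : |2*r*Real.sin θ - z₀.im| < ε := lt_of_le_of_lt (hbθ θ) hstrip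
      have h1 := (hFint _ hb).comp_sub_right (-(2*r*Real.cos θ - z₀.re))
      refine h1.norm.congr (Filter.Eventually.of_forall fun s => ?_)
      simp only [hAdef, hcirc_eq s θ, sub_neg_eq_add]
    have hAprod : Integrable A (volume.prod ν) := by
      refine (integrable_prod_iff' hAcont.aestronglyMeasurable).2 ⟨?_, ?_⟩
      · exact Filter.Eventually.of_forall fun θ => hslice θ
      · obtain ⟨M, hM⟩ := hFsup (|z₀.im| + 2*r) (by positivity) hstrip
        have hmeas : StronglyMeasurable fun θ : ℝ => ∫ s : ℝ, ‖A (s, θ)‖ ∂volume :=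
          (hAcont.norm.stronglyMeasurable).integral_prod_left'
        refine Integrable.mono' (integrable_const |M|) hmeas.aestronglyMeasurable
          (Filter.Eventually.of_forall fun θ => ?_)
        have hnn : 0 ≤ ∫ s : ℝ, ‖A (s, θ)‖ ∂volume := integral_nonneg fun s => norm_nonneg _
        rw [Real.norm_eq_abs, _root_.abs_of_nonneg hnn]
        have key : (∫ s : ℝ, ‖A (s, θ)‖ ∂volume)
            = ∫ x : ℝ, ‖F ((x : ℂ) + ((2*r*Real.sin θ - z₀.im : ℝ) : ℂ) * Complex.I)‖ := by
          rw [← integral_add_right_eq_self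
            (fun x : ℝ => ‖F ((x : ℂ) + ((2*r*Real.sin θ - z₀.im : ℝ) : ℂ) * Complex.I)‖)
            (2*r*Real.cos θ - z₀.re)]
          congr 1
          funext s
          rw [Real.norm_eq_abs, _root_.abs_of_nonneg (norm_nonneg _)]
          simp only [hAdef]
          rw [hcirc_eq]
        rw [key]
        exact le_trans (hM _ (hbθ θ)) (le_abs_self M)
    have hboundint : Integrable
        (fun s : ℝ => (Real.pi * r)⁻¹ * ‖v‖ * ∫ θ : ℝ, A (s, θ) ∂ν) volume :=
      (hAprod.integral_prod_left).const_mul _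
    have hderivcont : Continuous fun s : ℝ => (deriv F ((s : ℂ) - z₀) * (-1)) • π s v := by
      have h1 : ContinuousOn (deriv F) S :=
        ((hF.analyticOnNhd hSopen).deriv).continuousOn
      have h2 : Continuous fun s : ℝ => deriv F ((s : ℂ) - z₀) :=
        h1.comp_continuous (Complex.continuous_ofReal.sub continuous_const) (hmemS z₀ hz₀)
      exact (h2.mul continuous_const).smul hcv
    have hlip : ∀ᵐ s : ℝ ∂(volume : Measure ℝ),
        LipschitzOnWith (Real.nnabs ((Real.pi * r)⁻¹ * ‖v‖ * ∫ θ : ℝ, A (s, θ) ∂ν))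
          (fun z : ℂ => F ((s : ℂ) - z) • π s v) (ball z₀ r) := by
      refine Filter.Eventually.of_forall fun s => ?_
      apply LipschitzOnWith.of_dist_le_mul
      intro z₁ hz₁ z₂ hz₂
      have hw1 : ((s : ℂ) - z₁) ∈ ball ((s : ℂ) - z₀) r := by
        rw [mem_ball, Complex.dist_eq]
        have e : (s : ℂ) - z₁ - ((s : ℂ) - z₀) = z₀ - z₁ := by ring
        rw [e, ← Complex.dist_eq, dist_comm]
        exact mem_ball.mp hz₁
      have hw2 : ((s : ℂ) - z₂) ∈ ball ((s : ℂ) - z₀) r := by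
        rw [mem_ball, Complex.dist_eq]
        have e : (s : ℂ) - z₂ - ((s : ℂ) - z₀) = z₀ - z₂ := by ring
        rw [e, ← Complex.dist_eq, dist_comm]
        exact mem_ball.mp hz₂
      have hlipF := aux_lip hrpos (hF.mono (hcb s)) hw1 hw2
      have hdw : dist ((s : ℂ) - z₁) ((s : ℂ) - z₂) = dist z₁ z₂ := by
        rw [Complex.dist_eq, Complex.dist_eq]
        have e : (s : ℂ) - z₁ - ((s : ℂ) - z₂) = -(z₁ - z₂) := by ring
        rw [e, norm_neg]
      rw [hdw] at hlipF
      have hds : dist (F ((s : ℂ) - z₁) • π s v) (F ((s : ℂ) - z₂) • π s v)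
          = ‖F ((s : ℂ) - z₁) - F ((s : ℂ) - z₂)‖ * ‖v‖ := by
        rw [dist_eq_norm, ← sub_smul, norm_smul, (π s).norm_map]
      have hT : (∫ θ : ℝ, A (s, θ) ∂ν)
          = ∫ θ in (0)..(2*Real.pi), ‖F (circleMap ((s : ℂ) - z₀) (2*r) θ)‖ := by
        rw [intervalIntegral.integral_of_le Real.two_pi_pos.le]
      have hTnn : 0 ≤ ∫ θ : ℝ, A (s, θ) ∂ν :=
        integral_nonneg fun θ => norm_nonneg _
      have hbnn : 0 ≤ (Real.pi * r)⁻¹ * ‖v‖ * ∫ θ : ℝ, A (s, θ) ∂ν := by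
        have h0 : (0:ℝ) < Real.pi * r := mul_pos Real.pi_pos hrpos
        exact mul_nonneg (mul_nonneg (inv_nonneg.2 h0.le) (norm_nonneg v)) hTnn
      have hcoe : ((Real.nnabs ((Real.pi * r)⁻¹ * ‖v‖ * ∫ θ : ℝ, A (s, θ) ∂ν)) : ℝ)
          = (Real.pi * r)⁻¹ * ‖v‖ * ∫ θ : ℝ, A (s, θ) ∂ν := by
        rw [Real.coe_nnabs, _root_.abs_of_nonneg hbnn]
      rw [hds, hcoe]
      calc ‖F ((s : ℂ) - z₁) - F ((s : ℂ) - z₂)‖ * ‖v‖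
          ≤ ((Real.pi * r)⁻¹
              * (∫ θ in (0)..(2*Real.pi), ‖F (circleMap ((s : ℂ) - z₀) (2*r) θ)‖)
              * dist z₁ z₂) * ‖v‖ :=
            mul_le_mul_of_nonneg_right hlipF (norm_nonneg v)
        _ = (Real.pi * r)⁻¹ * ‖v‖ * (∫ θ : ℝ, A (s, θ) ∂ν) * dist z₁ z₂ := by
            rw [hT]; ring
    have hdiffae : ∀ᵐ s : ℝ ∂(volume : Measure ℝ),
        HasDerivAt (fun z : ℂ => F ((s : ℂ) - z) • π s v)
          ((deriv F ((s : ℂ) - z₀) * (-1)) • π s v) z₀ := by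
      refine Filter.Eventually.of_forall fun s => ?_
      have hd1 : HasDerivAt F (deriv F ((s : ℂ) - z₀)) ((s : ℂ) - z₀) :=
        (hF.differentiableAt (hSopen.mem_nhds (hmemS z₀ hz₀ s))).hasDerivAt
      have hd2 : HasDerivAt (fun z : ℂ => (s : ℂ) - z) (-1) z₀ := by
        simpa using (hasDerivAt_id z₀).const_sub ((s : ℂ))
      have hd3 : HasDerivAt (fun z : ℂ => F ((s : ℂ) - z)) (deriv F ((s : ℂ) - z₀) * (-1)) z₀ :=
        HasDerivAt.comp z₀ hd1 hd2
      exact hd3.smul_const (π s v)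
    have hmain := hasDerivAt_integral_of_dominated_loc_of_lip (μ := (volume : Measure ℝ))
      (F := fun (z : ℂ) (s : ℝ) => F ((s : ℂ) - z) • π s v)
      (F' := fun s : ℝ => (deriv F ((s : ℂ) - z₀) * (-1)) • π s v)
      (x₀ := z₀) (bound := fun s : ℝ => (Real.pi * r)⁻¹ * ‖v‖ * ∫ θ : ℝ, A (s, θ) ∂ν)
      (ball_mem_nhds z₀ hrpos)
      (Filter.eventually_of_mem (hSopen.mem_nhds hz₀)
        (fun z hz => (hQc z hz).aestronglyMeasurable))
      (hQint z₀ hz₀)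
      hderivcont.aestronglyMeasurable
      hlip hboundint hdiffae
    exact (hmain.2.differentiableAt).differentiableWithinAt
  have htS : ((t : ℂ)) ∈ S := by
    show |((t : ℂ)).im| < ε
    simpa using hε
  have hΦana : AnalyticAt ℂ Φ ((t : ℂ)) := hΦdiff.analyticAt (hSopen.mem_nhds htS)
  have hcomp : AnalyticAt ℝ (fun τ : ℝ => Φ ((τ : ℂ))) t := by
    have := (hΦana.restrictScalars).comp (Complex.ofRealCLM.analyticAt t)
    exact this
  have hfint : Integrable (fun s : ℝ => f s • π s v) volume := by
    refine Integrable.mono' (hf.norm.mul_const ‖v‖)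
      (hf.aestronglyMeasurable.smul hcv.aestronglyMeasurable)
      (Filter.Eventually.of_forall fun s => ?_)
    rw [norm_smul, (π s).norm_map]
  have heq : ∀ τ : ℝ, π τ (∫ s : ℝ, f s • π s v) = Φ ((τ : ℂ)) := by
    intro τ
    have h1 : π τ (∫ s : ℝ, f s • π s v) = ∫ s : ℝ, f s • π τ (π s v) := by
      have h := LinearIsometry.integral_comp_comm (μ := (volume : Measure ℝ))
        ((π τ).toLinearIsometry) (fun s : ℝ => f s • π s v)
      simp only [LinearIsometryEquiv.coe_toLinearIsometry, _root_.map_smul] at h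
      exact h.symm
    have h2 : (∫ s : ℝ, f s • π τ (π s v)) = ∫ s : ℝ, f (s - τ) • π s v := by
      have h3 := integral_add_left_eq_self (μ := (volume : Measure ℝ))
        (fun u : ℝ => f (u - τ) • π u v) τ
      rw [← h3]
      congr 1
      funext s
      rw [add_sub_cancel_left, hπadd]
    have h4 : (∫ s : ℝ, f (s - τ) • π s v) = ∫ s : ℝ, F ((s : ℂ) - (τ : ℂ)) • π s v := by
      apply integral_congr_ae
      have h5 : ∀ᵐ s : ℝ ∂volume, F (((s - τ : ℝ)) : ℂ) = f (s - τ) :=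
        (measurePreserving_sub_right volume τ).quasiMeasurePreserving.ae hFf
      filter_upwards [h5] with s hs
      rw [← hs]
      norm_cast
    rw [h1, h2, h4]
  refine hcomp.congr ?_
  filter_upwards with τ
  exact (heq τ).symm
end
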